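/- For every integer n ≥ 1, I(n) = 3/4 + 2 ∑_{k=1}^∞ n^{-k} ∑_{m=1}^∞ (-1)^{m-k} (ζ_{m-1}({1}_{k-1})/m) ∫₀¹ uᵐⁿ/(1+u)³ du, where the inner series converges absolutely for each k and the outer series converges absolutely. -/

import Mathlib

open scoped Nat

/-- Truncated multiple zeta value `ζ_r({1}_k)`. -/
noncomputable def zt1 : ℕ → ℕ → ℝ
  | _, 0 => 1
  | r, k + 1 => ∑ n ∈ Finset.Icc 1 r, (1 / (n : ℝ)) * zt1 (n - 1) k

lemma zt1_zero_right (r : ℕ) : zt1 r 0 = 1 := rfl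

lemma zt1_succ (r k : ℕ) :
    zt1 r (k+1) = ∑ n ∈ Finset.Icc 1 r, (1 / (n : ℝ)) * zt1 (n - 1) k := rfl

lemma zt1_zero_left (k : ℕ) : zt1 0 (k+1) = 0 := by simp [zt1_succ]

lemma zt1_nonneg (k r : ℕ) : 0 ≤ zt1 r k := by
  induction k generalizing r with
  | zero => simp [zt1_zero_right]
  | succ k ih =>
    rw [zt1_succ]
    exact Finset.sum_nonneg fun n _ => mul_nonneg (by positivity) (ih _)

lemma zt1_rec (p k : ℕ) : zt1 (p+1) (k+1) = zt1 p (k+1) + zt1 p k / (p+1) := by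
  rw [zt1_succ, zt1_succ, Finset.sum_Icc_succ_top (Nat.le_add_left 1 p)]
  simp [div_eq_mul_inv, mul_comm]

lemma zt1_sum (p k : ℕ) :
    zt1 (p+1) (k+1) = ∑ m ∈ Finset.range (p+1), zt1 m k / (m+1) := by
  induction p with
  | zero => simp [zt1_rec, zt1_zero_left]
  | succ p ih =>
    rw [Finset.sum_range_succ, ← ih, zt1_rec]

lemma zt1_le_pow (k m : ℕ) : zt1 m k ≤ (m : ℝ) ^ k := by
  induction k generalizing m with
  | zero => simp [zt1_zero_right]
  | succ k ih =>
    rw [zt1_succ]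
    calc ∑ n ∈ Finset.Icc 1 m, (1 / (n : ℝ)) * zt1 (n - 1) k
        ≤ ∑ n ∈ Finset.Icc 1 m, (m : ℝ) ^ k := by
          refine Finset.sum_le_sum fun n hn => ?_
          rcases Finset.mem_Icc.mp hn with ⟨h1, h2⟩
          have h3 : (1 : ℝ) / n ≤ 1 := by
            rw [div_le_one (by exact_mod_cast h1)]; exact_mod_cast h1
          calc (1 / (n : ℝ)) * zt1 (n - 1) k ≤ 1 * ((n - 1 : ℕ) : ℝ) ^ k :=
                mul_le_mul h3 (ih _) (zt1_nonneg _ _) zero_le_one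
            _ ≤ (m : ℝ) ^ k := by
                rw [one_mul]
                exact pow_le_pow_left₀ (by positivity) (by exact_mod_cast Nat.le_trans (Nat.sub_le n 1) h2) k
      _ = m * (m:ℝ)^k := by rw [Finset.sum_const, Nat.card_Icc]; simp
      _ = (m:ℝ)^(k+1) := by ring

lemma zt1_le_log (k m : ℕ) : zt1 m k ≤ (1 + Real.log m) ^ k := by
  induction k generalizing m with
  | zero => simp [zt1_zero_right]
  | succ k ih =>
    rcases Nat.eq_zero_or_pos m with rfl | hm
    · simp [zt1_zero_left, Real.log_zero]
    have hm1 : (1:ℝ) ≤ m := by exact_mod_cast hm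
    have hlogm : 0 ≤ Real.log m := Real.log_nonneg hm1
    rw [zt1_succ]
    calc ∑ n ∈ Finset.Icc 1 m, (1 / (n : ℝ)) * zt1 (n - 1) k
        ≤ ∑ n ∈ Finset.Icc 1 m, (1 / (n : ℝ)) * (1 + Real.log m) ^ k := by
          refine Finset.sum_le_sum fun n hn => ?_
          rcases Finset.mem_Icc.mp hn with ⟨h1, h2⟩
          refine mul_le_mul_of_nonneg_left ?_ (by positivity)
          refine le_trans (ih _) (pow_le_pow_left₀ ?_ ?_ k)
          · have : ((n-1:ℕ):ℝ) = 0 ∨ (1:ℝ) ≤ ((n-1:ℕ):ℝ) := by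
              rcases Nat.eq_zero_or_pos (n-1) with h | h
              · left; simp [h]
              · right; exact_mod_cast h
            rcases this with h | h
            · simp [h]
            · have := Real.log_nonneg h; linarith
          · have : Real.log ((n-1:ℕ):ℝ) ≤ Real.log m := by
              rcases Nat.eq_zero_or_pos (n-1) with h | h
              · simp [h]; exact hlogm
              · exact Real.log_le_log (by exact_mod_cast h)
                  (by exact_mod_cast Nat.le_trans (Nat.sub_le n 1) h2)
            linarith
      _ = (∑ n ∈ Finset.Icc 1 m, (1 / (n : ℝ))) * (1 + Real.log m) ^ k := by
          rw [Finset.sum_mul]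
      _ ≤ (1 + Real.log m) * (1 + Real.log m) ^ k := by
          refine mul_le_mul_of_nonneg_right ?_ (by positivity)
          have := harmonic_le_one_add_log m
          rw [harmonic_eq_sum_Icc] at this
          push_cast at this
          simpa [one_div] using this
      _ = (1 + Real.log m) ^ (k+1) := by ring

noncomputable def zc (k m : ℕ) : ℝ := (-1)^(m+k) * zt1 m k / (m+1)

lemma abs_zc_le (k m : ℕ) : |zc k m| ≤ ((m:ℝ)+1)^k := by
  have h1 : |zc k m| = zt1 m k / (m+1) := by
    rw [zc, abs_div, abs_mul, abs_pow, abs_neg, abs_one, one_pow, one_mul,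
      abs_of_nonneg (zt1_nonneg k m), abs_of_nonneg (by positivity : (0:ℝ) ≤ (m:ℝ)+1)]
  rw [h1]
  calc zt1 m k / (m+1) ≤ zt1 m k := by
        refine div_le_self (zt1_nonneg k m) (by simp)
    _ ≤ (m:ℝ)^k := zt1_le_pow k m
    _ ≤ ((m:ℝ)+1)^k := by
        exact pow_le_pow_left₀ (by positivity) (by linarith) k

lemma summable_pow_mul_geom (K : ℕ) {t : ℝ} (h0 : 0 ≤ t) (h1 : t < 1) :
    Summable fun p : ℕ => ((p:ℝ)+1)^K * t^(p+1) := by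
  have h := summable_pow_mul_geometric_of_norm_lt_one (R := ℝ) K
    (r := t) (by rwa [Real.norm_eq_abs, abs_of_nonneg h0])
  have h2 := (summable_nat_add_iff 1).mpr h
  refine h2.congr fun p => ?_
  push_cast
  ring

lemma summable_abs_zc (k : ℕ) {t : ℝ} (h0 : 0 ≤ t) (h1 : t < 1) :
    Summable fun m : ℕ => |zc k m * t^(m+1)| := by
  refine Summable.of_nonneg_of_le (fun m => abs_nonneg _) (fun m => ?_)
    (summable_pow_mul_geom k h0 h1)
  rw [abs_mul, abs_pow, abs_of_nonneg h0]
  exact mul_le_mul_of_nonneg_right (abs_zc_le k m) (by positivity)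

lemma summable_zc (k : ℕ) {t : ℝ} (h0 : 0 ≤ t) (h1 : t < 1) :
    Summable fun m : ℕ => zc k m * t^(m+1) :=
  (summable_abs_zc k h0 h1).of_abs

/-- Cauchy product step. -/
lemma cauchy_step (k : ℕ) {s : ℝ} (h0 : 0 ≤ s) (h1 : s < 1) :
    (∑' m : ℕ, zc k m * s^(m+1)) * (1+s)⁻¹ =
      ∑' p : ℕ, ((-1:ℝ)^(p+k) * zt1 (p+1) (k+1)) * s^(p+1) := by
  have hgeo : HasSum (fun j : ℕ => (-s)^j) (1+s)⁻¹ := by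
    have := hasSum_geometric_of_norm_lt_one (ξ := -s)
      (by rwa [norm_neg, Real.norm_eq_abs, abs_of_nonneg h0])
    simpa [sub_neg_eq_add] using this
  rw [← hgeo.tsum_eq]
  have hgs : Summable fun j : ℕ => ‖(-s)^j‖ := by
    refine (summable_geometric_of_lt_one h0 h1).congr fun j => ?_
    rw [Real.norm_eq_abs, abs_pow, abs_neg, abs_of_nonneg h0]
  rw [tsum_mul_tsum_eq_tsum_sum_antidiagonal_of_summable_norm
    (by simpa only [Real.norm_eq_abs] using summable_abs_zc k h0 h1) hgs]
  refine tsum_congr fun p => ?_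
  rw [Finset.Nat.sum_antidiagonal_eq_sum_range_succ_mk]
  rw [zt1_sum p k, Finset.mul_sum, Finset.sum_mul]
  refine Finset.sum_congr rfl fun i hi => ?_
  have hip : i ≤ p := Nat.lt_succ_iff.mp (Finset.mem_range.mp hi)
  have e1 : s^(i+1) * s^(p-i) = s^(p+1) := by
    rw [← pow_add]; congr 1; omega
  have e2 : ((-1:ℝ))^(i+k) * (-1)^(p-i) = (-1)^(p+k) := by
    rw [← pow_add]; congr 1; omega
  have e3 : zc k i * s^(i+1) * (-s)^(p-i)
      = ((-1:ℝ)^(i+k) * (-1)^(p-i)) * (zt1 i k/(i+1)) * (s^(i+1)*s^(p-i)) := by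
    rw [zc, neg_pow]; ring
  rw [e3, e1, e2]

lemma ftc_log (K : ℕ) {t : ℝ} (h0 : 0 ≤ t) :
    ∫ s in (0:ℝ)..t, (Real.log (1+s))^K / ((K ! : ℝ) * (1+s)) =
      (Real.log (1+t))^(K+1) / ((K+1)! : ℝ) := by
  have hne : ∀ s ∈ Set.uIcc (0:ℝ) t, (1:ℝ)+s ≠ 0 := by
    intro s hs
    rw [Set.uIcc_of_le h0] at hs
    have := hs.1; positivity
  have key : ∀ s ∈ Set.uIcc (0:ℝ) t,
      HasDerivAt (fun x => (Real.log (1+x))^(K+1) / ((K+1)! : ℝ))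
        ((Real.log (1+s))^K / ((K ! : ℝ) * (1+s))) s := by
    intro s hs
    have hs0 : 0 ≤ s := by rw [Set.uIcc_of_le h0] at hs; exact hs.1
    have d1 : HasDerivAt (fun x : ℝ => Real.log (1+x)) (1/(1+s)) s := by
      have := ((hasDerivAt_id s).const_add 1).log (hne s hs)
      simpa using this
    have d2 := (d1.pow (K+1)).div_const ((K+1)! : ℝ)
    refine d2.congr_deriv ?_
    rw [Nat.factorial_succ, Nat.add_sub_cancel]
    have hK : (K ! : ℝ) ≠ 0 := by positivity
    have h1s : (1:ℝ)+s ≠ 0 := hne s hs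
    field_simp
    push_cast
    ring
  have hcont : ContinuousOn (fun s => (Real.log (1+s))^K / ((K ! : ℝ) * (1+s)))
      (Set.uIcc (0:ℝ) t) := by
    refine ContinuousOn.div ?_ (by fun_prop) ?_
    · exact (ContinuousOn.log (by fun_prop) hne).pow K
    · intro s hs
      have := hne s hs
      have hK : (K ! : ℝ) ≠ 0 := by positivity
      exact mul_ne_zero hK this
  rw [intervalIntegral.integral_eq_sub_of_hasDerivAt key
    (hcont.intervalIntegrable)]
  simp

lemma tsum_zc (k : ℕ) : ∀ {t : ℝ}, 0 ≤ t → t < 1 →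
    (∑' m : ℕ, zc k m * t^(m+1)) = (Real.log (1+t))^(k+1) / ((k+1)! : ℝ) := by
  induction k with
  | zero =>
    intro t h0 h1
    have h := (Real.hasSum_pow_div_log_of_abs_lt_one (x := -t)
      (by rwa [abs_neg, abs_of_nonneg h0])).neg
    have e : (fun m : ℕ => -((-t)^(m+1)/((m:ℝ)+1))) = fun m : ℕ => zc 0 m * t^(m+1) := by
      funext m
      rw [zc, neg_pow, zt1_zero_right]
      push_cast
      ring
    rw [e] at h
    rw [h.tsum_eq, sub_neg_eq_add, neg_neg]
    simp
  | succ k ih =>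
    intro t h0 h1
    set d : ℕ → ℝ := fun p => (-1:ℝ)^(p+k) * zt1 (p+1) (k+1) with hd
    have habs : ∀ p : ℕ, |d p| ≤ ((p:ℝ)+1)^(k+1) := by
      intro p
      rw [hd, abs_mul, abs_pow, abs_neg, abs_one, one_pow, one_mul,
        abs_of_nonneg (zt1_nonneg _ _)]
      calc zt1 (p+1) (k+1) ≤ ((p+1:ℕ) : ℝ)^(k+1) := zt1_le_pow _ _
        _ = ((p:ℝ)+1)^(k+1) := by push_cast; ring
    -- step 1 : FTC value
    have e0 := ftc_log (k+1) h0
    -- step 2 : rewrite integrand as a series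
    have e1 : ∫ s in (0:ℝ)..t, (Real.log (1+s))^(k+1) / (((k+1)! : ℝ) * (1+s))
        = ∫ s in (0:ℝ)..t, ∑' p : ℕ, d p * s^(p+1) := by
      refine intervalIntegral.integral_congr fun s hs => ?_
      rw [Set.uIcc_of_le h0] at hs
      have hs1 : s < 1 := lt_of_le_of_lt hs.2 h1
      rw [← cauchy_step k hs.1 hs1, ih hs.1 hs1, div_mul_eq_div_div, div_eq_mul_inv]
    -- step 3 : swap sum and integral
    have hInt : ∀ p : ℕ, MeasureTheory.Integrable (fun s => d p * s^(p+1))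
        (MeasureTheory.volume.restrict (Set.Ioc (0:ℝ) t)) := by
      intro p
      exact Continuous.integrableOn_Ioc (by fun_prop)
    have hNorm : ∀ p : ℕ, (∫ s in Set.Ioc (0:ℝ) t, ‖d p * s^(p+1)‖) ≤
        (((p:ℝ)+1)^(k+1) * t^(p+1)) * t := by
      intro p
      have hb : ∀ s ∈ Set.Ioc (0:ℝ) t, ‖‖d p * s^(p+1)‖‖ ≤ |d p| * t^(p+1) := by
        intro s hs
        rw [norm_norm, norm_mul, norm_pow, Real.norm_eq_abs, Real.norm_eq_abs,
          abs_of_nonneg hs.1.le]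
        exact mul_le_mul_of_nonneg_left
          (pow_le_pow_left₀ hs.1.le hs.2 _) (abs_nonneg _)
      have hm : MeasureTheory.volume (Set.Ioc (0:ℝ) t) < ⊤ := by
        rw [Real.volume_Ioc]; exact ENNReal.ofReal_lt_top
      have := MeasureTheory.norm_setIntegral_le_of_norm_le_const hm hb
      rw [MeasureTheory.measureReal_def, Real.volume_Ioc, ENNReal.toReal_ofReal (by linarith)] at this
      calc (∫ s in Set.Ioc (0:ℝ) t, ‖d p * s^(p+1)‖)
          ≤ ‖∫ s in Set.Ioc (0:ℝ) t, ‖d p * s^(p+1)‖‖ := le_abs_self _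
        _ ≤ |d p| * t^(p+1) * (t - 0) := this
        _ ≤ (((p:ℝ)+1)^(k+1) * t^(p+1)) * t := by
            rw [sub_zero]
            exact mul_le_mul_of_nonneg_right
              (mul_le_mul_of_nonneg_right (habs p) (by positivity)) h0
    have hSum : Summable fun p : ℕ => ∫ s in Set.Ioc (0:ℝ) t, ‖d p * s^(p+1)‖ := by
      refine Summable.of_nonneg_of_le
        (fun p => MeasureTheory.integral_nonneg fun s => norm_nonneg _)
        hNorm (((summable_pow_mul_geom (k+1) h0 h1)).mul_right t)
    have e2 : ∫ s in (0:ℝ)..t, ∑' p : ℕ, d p * s^(p+1)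
        = ∑' p : ℕ, ∫ s in (0:ℝ)..t, d p * s^(p+1) := by
      rw [intervalIntegral.integral_of_le h0]
      rw [← MeasureTheory.integral_tsum_of_summable_integral_norm hInt hSum]
      refine tsum_congr fun p => (intervalIntegral.integral_of_le h0).symm
    have e3 : ∀ p : ℕ, (∫ s in (0:ℝ)..t, d p * s^(p+1)) = d p * (t^(p+2) / ((p:ℝ)+2)) := by
      intro p
      rw [intervalIntegral.integral_const_mul, integral_pow,
        zero_pow (by omega : p+1+1 ≠ 0), sub_zero]
      push_cast
      ring_nf
    -- assemble
    have hsum2 : (∑' m : ℕ, zc (k+1) m * t^(m+1))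
        = ∑' p : ℕ, zc (k+1) (p+1) * t^(p+2) := by
      rw [Summable.tsum_eq_zero_add (summable_zc (k+1) h0 h1)]
      rw [zc, zt1_zero_left]
      simp
    have hzc : ∀ p : ℕ, zc (k+1) (p+1) * t^(p+2) = d p * (t^(p+2) / ((p:ℝ)+2)) := by
      intro p
      rw [zc, hd]
      have : ((-1:ℝ))^((p+1)+(k+1)) = (-1)^(p+k) := by
        rw [show (p+1)+(k+1) = (p+k)+2 by omega, pow_add]
        norm_num
      rw [this]
      push_cast
      ring
    rw [hsum2, tsum_congr hzc, ← tsum_congr e3, ← e2, ← e1, e0]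

/-- summability of `(1+log(m+1))^k / (m+1)^2` -/
lemma summable_log_pow (k : ℕ) :
    Summable fun m : ℕ => (1 + Real.log ((m:ℝ)+1))^k / ((m:ℝ)+1)^2 := by
  set δ : ℝ := ((2*k+2 : ℕ) : ℝ)⁻¹ with hδ
  have hδ0 : 0 < δ := by rw [hδ]; positivity
  have key : ∀ m : ℕ, (1 + Real.log ((m:ℝ)+1))^k / ((m:ℝ)+1)^2
      ≤ (1+δ⁻¹)^k * (((m:ℝ)+1) ^ ((3:ℝ)/2))⁻¹ := by
    intro m
    set x : ℝ := (m:ℝ)+1 with hx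
    have hx1 : (1:ℝ) ≤ x := by rw [hx]; simp
    have hx0 : (0:ℝ) < x := by linarith
    have h1 : 1 + Real.log x ≤ (1+δ⁻¹) * x ^ δ := by
      have hl : Real.log x ≤ x ^ δ / δ := Real.log_le_rpow_div hx0.le hδ0
      have h2 : (1:ℝ) ≤ x ^ δ := Real.one_le_rpow hx1 hδ0.le
      calc 1 + Real.log x ≤ x ^ δ + δ⁻¹ * x ^ δ := by
            rw [div_eq_inv_mul] at hl; linarith
        _ = (1+δ⁻¹) * x ^ δ := by ring
    have h1' : 0 ≤ 1 + Real.log x := by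
      have := Real.log_nonneg hx1; linarith
    have h3 : (1 + Real.log x)^k ≤ ((1+δ⁻¹) * x ^ δ)^k :=
      pow_le_pow_left₀ h1' h1 k
    have h4 : ((1+δ⁻¹) * x ^ δ)^k = (1+δ⁻¹)^k * x ^ (δ * k) := by
      rw [mul_pow, ← Real.rpow_natCast (x ^ δ) k, ← Real.rpow_mul hx0.le]
    have hδk : δ * k ≤ (1:ℝ)/2 := by
      rw [hδ, inv_mul_le_iff₀ (by positivity)]
      push_cast
      linarith
    have h5 : x ^ (δ * k) ≤ x ^ ((1:ℝ)/2) :=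
      Real.rpow_le_rpow_of_exponent_le hx1 hδk
    have h7 : x ^ ((1:ℝ)/2) / x^2 = (x ^ ((3:ℝ)/2))⁻¹ := by
      rw [show (x:ℝ)^2 = x^((2:ℝ)) from by
            rw [← Real.rpow_natCast x 2]; norm_num,
        ← Real.rpow_sub hx0,
        show (1:ℝ)/2 - 2 = -((3:ℝ)/2) by norm_num,
        Real.rpow_neg hx0.le]
    calc (1 + Real.log x)^k / x^2 ≤ ((1+δ⁻¹)^k * x ^ ((1:ℝ)/2)) / x^2 := by
          refine div_le_div_of_nonneg_right ?_ (by positivity)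
          exact h3.trans (by rw [h4]; exact mul_le_mul_of_nonneg_left h5 (by positivity))
      _ = (1+δ⁻¹)^k * (x ^ ((1:ℝ)/2) / x^2) := by ring
      _ = (1+δ⁻¹)^k * (x ^ ((3:ℝ)/2))⁻¹ := by rw [h7]
  refine Summable.of_nonneg_of_le (fun m => ?_) key ?_
  · have : (0:ℝ) ≤ Real.log ((m:ℝ)+1) := Real.log_nonneg (by push_cast; linarith)
    positivity
  have base : Summable fun m : ℕ => (((m:ℝ))^((3:ℝ)/2))⁻¹ :=
    Real.summable_nat_rpow_inv.mpr (by norm_num)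
  have shifted := (summable_nat_add_iff 1).mpr base
  refine (shifted.mul_left ((1+δ⁻¹)^k)).congr fun m => ?_
  push_cast
  rfl

lemma abs_zc_eq (k m : ℕ) : |zc k m| = zt1 m k / ((m:ℝ)+1) := by
  rw [zc, abs_div, abs_mul, abs_pow, abs_neg, abs_one, one_pow, one_mul,
    abs_of_nonneg (zt1_nonneg k m), abs_of_nonneg (by positivity : (0:ℝ) ≤ (m:ℝ)+1)]

lemma one_add_log_nat_nonneg (m : ℕ) : 0 ≤ 1 + Real.log (m:ℝ) := by
  rcases Nat.eq_zero_or_pos m with rfl | hm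
  · simp
  · have : (0:ℝ) ≤ Real.log m := Real.log_nonneg (by exact_mod_cast hm)
    linarith

lemma cont_integrand (N : ℕ) : ContinuousOn (fun u : ℝ => u^N/(1+u)^3) (Set.Icc (0:ℝ) 1) := by
  refine ContinuousOn.div (by fun_prop) (by fun_prop) fun u hu => ?_
  have := hu.1; positivity

lemma J_nonneg (N : ℕ) : 0 ≤ ∫ u in (0:ℝ)..1, u^N/(1+u)^3 := by
  refine intervalIntegral.integral_nonneg zero_le_one fun u hu => ?_
  have := hu.1; positivity

lemma J_le (N : ℕ) : (∫ u in (0:ℝ)..1, u^N/(1+u)^3) ≤ ((N:ℝ)+1)⁻¹ := by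
  have h1 : (∫ u in (0:ℝ)..1, u^N/(1+u)^3) ≤ ∫ u in (0:ℝ)..1, u^N := by
    refine intervalIntegral.integral_mono_on zero_le_one
      (((cont_integrand N).mono (by rw [Set.uIcc_of_le zero_le_one])).intervalIntegrable)
      ((continuous_pow N).intervalIntegrable _ _) fun u hu => ?_
    have h0 := hu.1
    have h3 : (1:ℝ) ≤ (1+u)^3 := one_le_pow₀ (by linarith)
    exact div_le_self (by positivity) h3
  refine h1.trans ?_
  rw [integral_pow]
  norm_num

lemma inner_bound {n : ℕ} (hn : 1 ≤ n) (k m : ℕ) :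
    |zc k m * ∫ u in (0:ℝ)..1, u^((m+1)*n)/(1+u)^3|
      ≤ (1 + Real.log ((m:ℝ)+1))^k / ((m:ℝ)+1)^2 := by
  rw [abs_mul]
  have hJ : |∫ u in (0:ℝ)..1, u^((m+1)*n)/(1+u)^3| ≤ ((m:ℝ)+1)⁻¹ := by
    rw [abs_of_nonneg (J_nonneg _)]
    refine (J_le _).trans ?_
    rw [inv_le_inv₀ (by positivity) (by positivity)]
    have h : (m+1 : ℕ) ≤ (m+1)*n + 1 := by
      calc m+1 ≤ (m+1)*n := Nat.le_mul_of_pos_right _ hn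
        _ ≤ (m+1)*n + 1 := Nat.le_succ _
    calc ((m:ℝ)+1) = ((m+1 : ℕ) : ℝ) := by push_cast; ring
      _ ≤ (((m+1)*n + 1 : ℕ) : ℝ) := by exact_mod_cast h
      _ = (((m+1)*n : ℕ) : ℝ) + 1 := by push_cast; ring
  have hbase : (0:ℝ) ≤ 1 + Real.log ((m:ℝ)+1) := by
    have : (0:ℝ) ≤ Real.log ((m:ℝ)+1) :=
      Real.log_nonneg (by linarith [Nat.cast_nonneg (α := ℝ) m])
    linarith
  have hzc : |zc k m| ≤ (1 + Real.log ((m:ℝ)+1))^k / ((m:ℝ)+1) := by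
    rw [abs_zc_eq]
    have hnum : zt1 m k ≤ (1 + Real.log ((m:ℝ)+1))^k := by
      refine (zt1_le_log k m).trans (pow_le_pow_left₀ (one_add_log_nat_nonneg m) ?_ k)
      have : Real.log (m:ℝ) ≤ Real.log ((m:ℝ)+1) := by
        rcases Nat.eq_zero_or_pos m with rfl | hm
        · simp
        · exact Real.log_le_log (by exact_mod_cast hm) (by linarith)
      linarith
    exact div_le_div_of_nonneg_right hnum (by positivity) |>.trans_eq rfl
  calc |zc k m| * |∫ u in (0:ℝ)..1, u^((m+1)*n)/(1+u)^3|
      ≤ ((1 + Real.log ((m:ℝ)+1))^k / ((m:ℝ)+1)) * ((m:ℝ)+1)⁻¹ :=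
        mul_le_mul hzc hJ (abs_nonneg _) (div_nonneg (pow_nonneg hbase k) (by positivity))
    _ = (1 + Real.log ((m:ℝ)+1))^k / ((m:ℝ)+1)^2 := by
        rw [div_eq_mul_inv, mul_assoc, ← mul_inv, ← sq, ← div_eq_mul_inv]

lemma inner_summable {n : ℕ} (hn : 1 ≤ n) (k : ℕ) :
    Summable fun m : ℕ => |zc k m * ∫ u in (0:ℝ)..1, u^((m+1)*n)/(1+u)^3| :=
  Summable.of_nonneg_of_le (fun m => abs_nonneg _) (inner_bound hn k) (summable_log_pow k)

lemma stmt_term_eq (n k m : ℕ) :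
    (-1 : ℝ) ^ ((m + 1) + (k + 1)) * zt1 m k / (m + 1) *
        (∫ u in (0:ℝ)..1, u ^ ((m + 1) * n) / (1 + u) ^ 3)
      = zc k m * ∫ u in (0:ℝ)..1, u^((m+1)*n)/(1+u)^3 := by
  rw [zc, show (m+1)+(k+1) = (m+k)+2 by omega, pow_add]
  norm_num

lemma inner_eq {n : ℕ} (hn : 1 ≤ n) (k : ℕ) :
    (∑' m : ℕ, zc k m * ∫ u in (0:ℝ)..1, u^((m+1)*n)/(1+u)^3)
      = ∫ u in Set.Ioc (0:ℝ) 1,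
          (Real.log (1+u^n))^(k+1) / (((k+1)! : ℝ) * (1+u)^3) := by
  set F : ℕ → ℝ → ℝ := fun m u => zc k m * (u^((m+1)*n)/(1+u)^3) with hF
  have hInt : ∀ m : ℕ, MeasureTheory.Integrable (F m)
      (MeasureTheory.volume.restrict (Set.Ioc (0:ℝ) 1)) := by
    intro m
    have : MeasureTheory.IntegrableOn (F m) (Set.Icc (0:ℝ) 1) :=
      (continuousOn_const.mul (cont_integrand ((m+1)*n))).integrableOn_Icc
    exact this.mono_set Set.Ioc_subset_Icc_self
  have hIoc : ∀ m : ℕ, (∫ u in Set.Ioc (0:ℝ) 1, F m u)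
      = zc k m * ∫ u in (0:ℝ)..1, u^((m+1)*n)/(1+u)^3 := by
    intro m
    rw [intervalIntegral.integral_of_le zero_le_one, hF,
      MeasureTheory.integral_const_mul]
  have hNorm : ∀ m : ℕ, (∫ u in Set.Ioc (0:ℝ) 1, ‖F m u‖)
      ≤ (1 + Real.log ((m:ℝ)+1))^k / ((m:ℝ)+1)^2 := by
    intro m
    have he : (∫ u in Set.Ioc (0:ℝ) 1, ‖F m u‖)
        = |zc k m| * ∫ u in Set.Ioc (0:ℝ) 1, u^((m+1)*n)/(1+u)^3 := by
      rw [← MeasureTheory.integral_const_mul]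
      refine MeasureTheory.setIntegral_congr_fun measurableSet_Ioc fun u hu => ?_
      rw [hF, norm_mul, Real.norm_eq_abs, Real.norm_eq_abs,
        abs_of_nonneg (by have := hu.1.le; positivity :
          (0:ℝ) ≤ u^((m+1)*n)/(1+u)^3)]
    rw [he, ← intervalIntegral.integral_of_le zero_le_one]
    calc |zc k m| * ∫ u in (0:ℝ)..1, u^((m+1)*n)/(1+u)^3
        = |zc k m * ∫ u in (0:ℝ)..1, u^((m+1)*n)/(1+u)^3| := by
          rw [abs_mul, abs_of_nonneg (J_nonneg _)]
      _ ≤ _ := inner_bound hn k m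
  have hSum : Summable fun m : ℕ => ∫ u in Set.Ioc (0:ℝ) 1, ‖F m u‖ :=
    Summable.of_nonneg_of_le
      (fun m => MeasureTheory.integral_nonneg fun u => norm_nonneg _)
      hNorm (summable_log_pow k)
  have swap := MeasureTheory.integral_tsum_of_summable_integral_norm hInt hSum
  calc (∑' m : ℕ, zc k m * ∫ u in (0:ℝ)..1, u^((m+1)*n)/(1+u)^3)
      = ∑' m : ℕ, ∫ u in Set.Ioc (0:ℝ) 1, F m u := by
        exact (tsum_congr hIoc).symm
    _ = ∫ u in Set.Ioc (0:ℝ) 1, ∑' m : ℕ, F m u := swap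
    _ = ∫ u in Set.Ioc (0:ℝ) 1,
          (Real.log (1+u^n))^(k+1) / (((k+1)! : ℝ) * (1+u)^3) := by
        rw [MeasureTheory.integral_Ioc_eq_integral_Ioo,
          MeasureTheory.integral_Ioc_eq_integral_Ioo]
        refine MeasureTheory.setIntegral_congr_fun measurableSet_Ioo fun u hu => ?_
        have hu0 : (0:ℝ) < u := hu.1
        have hu1 : u < 1 := hu.2
        have ht0 : (0:ℝ) ≤ u^n := by positivity
        have ht1 : u^n < 1 := pow_lt_one₀ hu0.le hu1 (by omega)
        have hzt := tsum_zc k ht0 ht1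
        have hterm : ∀ m : ℕ, F m u = (zc k m * (u^n)^(m+1)) / (1+u)^3 := by
          intro m
          rw [hF, ← pow_mul, Nat.mul_comm n (m+1), mul_div_assoc]
        calc (∑' m : ℕ, F m u)
            = ∑' m : ℕ, (zc k m * (u^n)^(m+1)) / (1+u)^3 := tsum_congr hterm
          _ = (∑' m : ℕ, zc k m * (u^n)^(m+1)) / (1+u)^3 := tsum_div_const
          _ = (Real.log (1+u^n))^(k+1) / (((k+1)! : ℝ) * (1+u)^3) := by
              rw [hzt, div_div]

lemma L_mem {n : ℕ} (hn : 1 ≤ n) {u : ℝ} (h0 : 0 ≤ u) (h1 : u ≤ 1) :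
    0 ≤ Real.log (1+u^n) ∧ Real.log (1+u^n) ≤ Real.log 2 := by
  have hp0 : (0:ℝ) ≤ u^n := by positivity
  have hp1 : u^n ≤ 1 := pow_le_one₀ h0 h1
  constructor
  · exact Real.log_nonneg (by linarith)
  · exact Real.log_le_log (by linarith) (by linarith)

lemma cont_T {n : ℕ} (hn : 1 ≤ n) (k : ℕ) :
    ContinuousOn (fun u : ℝ => ((n:ℝ)⁻¹ * Real.log (1+u^n))^k / (k ! : ℝ) / (1+u)^3)
      (Set.Icc (0:ℝ) 1) := by
  have hlog : ContinuousOn (fun u : ℝ => Real.log (1+u^n)) (Set.Icc (0:ℝ) 1) := by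
    refine ContinuousOn.log (by fun_prop) fun u hu => ?_
    have := hu.1
    positivity
  refine ContinuousOn.div (ContinuousOn.div_const ?_ _) (by fun_prop) fun u hu => ?_
  · exact (continuousOn_const.mul hlog).pow k
  · have := hu.1; positivity

lemma T_bound {n : ℕ} (hn : 1 ≤ n) (k : ℕ) {u : ℝ} (h0 : 0 ≤ u) (h1 : u ≤ 1) :
    ‖((n:ℝ)⁻¹ * Real.log (1+u^n))^k / (k ! : ℝ) / (1+u)^3‖
      ≤ (Real.log 2)^k / (k ! : ℝ) := by
  obtain ⟨hL0, hL1⟩ := L_mem hn h0 h1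
  have hn0 : (0:ℝ) < n := by exact_mod_cast hn
  have hinv : (n:ℝ)⁻¹ ≤ 1 := by
    rw [inv_le_one_iff₀]; right; exact_mod_cast hn
  have hx0 : 0 ≤ (n:ℝ)⁻¹ * Real.log (1+u^n) := by positivity
  have hx1 : (n:ℝ)⁻¹ * Real.log (1+u^n) ≤ Real.log 2 := by
    calc (n:ℝ)⁻¹ * Real.log (1+u^n) ≤ 1 * Real.log (1+u^n) :=
          mul_le_mul_of_nonneg_right hinv hL0
      _ = Real.log (1+u^n) := one_mul _
      _ ≤ Real.log 2 := hL1
  have h3 : (1:ℝ) ≤ (1+u)^3 := one_le_pow₀ (by linarith)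
  have hnum : ((n:ℝ)⁻¹ * Real.log (1+u^n))^k ≤ (Real.log 2)^k :=
    pow_le_pow_left₀ hx0 hx1 k
  have hfac : (0:ℝ) < (k ! : ℝ) := by positivity
  rw [Real.norm_eq_abs, abs_of_nonneg (by positivity)]
  calc ((n:ℝ)⁻¹ * Real.log (1+u^n))^k / (k ! : ℝ) / (1+u)^3
      ≤ ((n:ℝ)⁻¹ * Real.log (1+u^n))^k / (k ! : ℝ) :=
        div_le_self (by positivity) h3
    _ ≤ (Real.log 2)^k / (k ! : ℝ) := by gcongr

lemma T_integral_bound {n : ℕ} (hn : 1 ≤ n) (k : ℕ) :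
    (∫ u in Set.Ioc (0:ℝ) 1, ‖((n:ℝ)⁻¹ * Real.log (1+u^n))^k / (k ! : ℝ) / (1+u)^3‖)
      ≤ (Real.log 2)^k / (k ! : ℝ) := by
  have hm : MeasureTheory.volume (Set.Ioc (0:ℝ) 1) < ⊤ := by
    rw [Real.volume_Ioc]; exact ENNReal.ofReal_lt_top
  have hb : ∀ u ∈ Set.Ioc (0:ℝ) 1,
      ‖‖((n:ℝ)⁻¹ * Real.log (1+u^n))^k / (k ! : ℝ) / (1+u)^3‖‖
        ≤ (Real.log 2)^k / (k ! : ℝ) := by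
    intro u hu
    rw [norm_norm]
    exact T_bound hn k hu.1.le hu.2
  have hasm : MeasureTheory.AEStronglyMeasurable
      (fun u : ℝ => ‖((n:ℝ)⁻¹ * Real.log (1+u^n))^k / (k ! : ℝ) / (1+u)^3‖)
      (MeasureTheory.volume.restrict (Set.Ioc (0:ℝ) 1)) :=
    (((cont_T hn k).norm.mono Set.Ioc_subset_Icc_self).aestronglyMeasurable
      measurableSet_Ioc)
  have hle := MeasureTheory.norm_setIntegral_le_of_norm_le_const hm hb
  rw [MeasureTheory.measureReal_def, Real.volume_Ioc, ENNReal.toReal_ofReal (by norm_num)] at hle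
  calc (∫ u in Set.Ioc (0:ℝ) 1, ‖((n:ℝ)⁻¹ * Real.log (1+u^n))^k / (k ! : ℝ) / (1+u)^3‖)
      ≤ ‖∫ u in Set.Ioc (0:ℝ) 1, ‖((n:ℝ)⁻¹ * Real.log (1+u^n))^k / (k ! : ℝ) / (1+u)^3‖‖ :=
        le_abs_self _
    _ ≤ (Real.log 2)^k / (k ! : ℝ) * (1 - 0) := hle
    _ = (Real.log 2)^k / (k ! : ℝ) := by norm_num

lemma summable_logtwo : Summable fun k : ℕ => (Real.log 2)^k / (k ! : ℝ) :=
  Real.summable_pow_div_factorial (Real.log 2)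

lemma exp_pointwise {n : ℕ} (hn : 1 ≤ n) {u : ℝ} (h0 : 0 ≤ u) :
    HasSum (fun k : ℕ => ((n:ℝ)⁻¹ * Real.log (1+u^n))^k / (k ! : ℝ) / (1+u)^3)
      ((1+u^n) ^ ((n:ℝ)⁻¹) / (1+u)^3) := by
  have hpos : (0:ℝ) < 1 + u^n := by positivity
  have hexp : (1+u^n) ^ ((n:ℝ)⁻¹) = Real.exp ((n:ℝ)⁻¹ * Real.log (1+u^n)) := by
    rw [Real.rpow_def_of_pos hpos, mul_comm]
  have h := NormedSpace.expSeries_div_hasSum_exp ((n:ℝ)⁻¹ * Real.log (1+u^n))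
  rw [← Real.exp_eq_exp_ℝ] at h
  rw [hexp]
  exact h.div_const _

lemma outer_swap {n : ℕ} (hn : 1 ≤ n) :
    (∫ u in Set.Ioc (0:ℝ) 1, (1+u^n) ^ ((n:ℝ)⁻¹) / (1+u)^3)
      = ∑' k : ℕ, ∫ u in Set.Ioc (0:ℝ) 1,
          ((n:ℝ)⁻¹ * Real.log (1+u^n))^k / (k ! : ℝ) / (1+u)^3 := by
  have hInt : ∀ k : ℕ, MeasureTheory.Integrable
      (fun u : ℝ => ((n:ℝ)⁻¹ * Real.log (1+u^n))^k / (k ! : ℝ) / (1+u)^3)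
      (MeasureTheory.volume.restrict (Set.Ioc (0:ℝ) 1)) := fun k =>
    ((cont_T hn k).integrableOn_Icc).mono_set Set.Ioc_subset_Icc_self
  have hSum : Summable fun k : ℕ => ∫ u in Set.Ioc (0:ℝ) 1,
      ‖((n:ℝ)⁻¹ * Real.log (1+u^n))^k / (k ! : ℝ) / (1+u)^3‖ :=
    Summable.of_nonneg_of_le
      (fun k => MeasureTheory.integral_nonneg fun u => norm_nonneg _)
      (fun k => T_integral_bound hn k) summable_logtwo
  rw [MeasureTheory.integral_tsum_of_summable_integral_norm hInt hSum]
  refine MeasureTheory.setIntegral_congr_fun measurableSet_Ioc fun u hu => ?_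
  exact ((exp_pointwise hn hu.1.le).tsum_eq).symm

lemma T_summable {n : ℕ} (hn : 1 ≤ n) :
    Summable fun k : ℕ => ∫ u in Set.Ioc (0:ℝ) 1,
      ((n:ℝ)⁻¹ * Real.log (1+u^n))^k / (k ! : ℝ) / (1+u)^3 := by
  refine Summable.of_nonneg_of_le (fun k => ?_) (fun k => ?_) summable_logtwo
  · refine MeasureTheory.setIntegral_nonneg measurableSet_Ioc fun u hu => ?_
    have h0 := hu.1.le
    obtain ⟨hL0, _⟩ := L_mem hn h0 hu.2
    positivity
  · calc (∫ u in Set.Ioc (0:ℝ) 1, ((n:ℝ)⁻¹ * Real.log (1+u^n))^k / (k ! : ℝ) / (1+u)^3)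
        ≤ ‖∫ u in Set.Ioc (0:ℝ) 1,
            ((n:ℝ)⁻¹ * Real.log (1+u^n))^k / (k ! : ℝ) / (1+u)^3‖ := le_abs_self _
      _ ≤ ∫ u in Set.Ioc (0:ℝ) 1,
            ‖((n:ℝ)⁻¹ * Real.log (1+u^n))^k / (k ! : ℝ) / (1+u)^3‖ :=
          MeasureTheory.norm_integral_le_integral_norm _
      _ ≤ (Real.log 2)^k / (k ! : ℝ) := T_integral_bound hn k

lemma T_zero {n : ℕ} (hn : 1 ≤ n) :
    (∫ u in Set.Ioc (0:ℝ) 1,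
      ((n:ℝ)⁻¹ * Real.log (1+u^n))^0 / (0! : ℝ) / (1+u)^3) = 3/8 := by
  have h1 : (∫ u in Set.Ioc (0:ℝ) 1,
      ((n:ℝ)⁻¹ * Real.log (1+u^n))^0 / (0! : ℝ) / (1+u)^3)
      = ∫ u in (0:ℝ)..1, ((1+u)^3)⁻¹ := by
    rw [intervalIntegral.integral_of_le zero_le_one]
    refine MeasureTheory.setIntegral_congr_fun measurableSet_Ioc fun u hu => ?_
    simp
  rw [h1]
  have key : ∀ u ∈ Set.uIcc (0:ℝ) 1,
      HasDerivAt (fun v : ℝ => -(1/2) * ((1+v)^2)⁻¹) (((1+u)^3)⁻¹) u := by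
    intro u hu
    rw [Set.uIcc_of_le zero_le_one] at hu
    have h1u : (0:ℝ) < 1+u := by have := hu.1; linarith
    have d1 : HasDerivAt (fun v : ℝ => (1+v)^2) (2*(1+u)) u := by
      have := ((hasDerivAt_id u).const_add 1).pow 2
      refine this.congr_deriv ?_
      simp
    have d2 := (d1.inv (by positivity)).const_mul (-(1/2) : ℝ)
    refine d2.congr_deriv ?_
    field_simp
  have hcont : ContinuousOn (fun u : ℝ => ((1+u)^3)⁻¹) (Set.uIcc (0:ℝ) 1) := by
    rw [Set.uIcc_of_le zero_le_one]
    refine ContinuousOn.inv₀ (by fun_prop) fun u hu => ?_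
    have := hu.1; positivity
  rw [intervalIntegral.integral_eq_sub_of_hasDerivAt key hcont.intervalIntegrable]
  norm_num

lemma T_succ {n : ℕ} (hn : 1 ≤ n) (k : ℕ) :
    (∫ u in Set.Ioc (0:ℝ) 1,
        ((n:ℝ)⁻¹ * Real.log (1+u^n))^(k+1) / ((k+1)! : ℝ) / (1+u)^3)
      = ((n:ℝ)^(k+1))⁻¹ * ∫ u in Set.Ioc (0:ℝ) 1,
          (Real.log (1+u^n))^(k+1) / (((k+1)! : ℝ) * (1+u)^3) := by
  rw [← MeasureTheory.integral_const_mul]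
  refine MeasureTheory.setIntegral_congr_fun measurableSet_Ioc fun u hu => ?_
  rw [mul_pow, ← inv_pow]
  field_simp

lemma In_eq {n : ℕ} (hn : 1 ≤ n) :
    (∫ x in (0:ℝ)..1, (x ^ n + (1 - x) ^ n) ^ ((n : ℝ)⁻¹))
      = 2 * ∫ u in Set.Ioc (0:ℝ) 1, (1+u^n) ^ ((n:ℝ)⁻¹) / (1+u)^3 := by
  set f : ℝ → ℝ := fun x => (x ^ n + (1 - x) ^ n) ^ ((n : ℝ)⁻¹) with hf
  have hfc : Continuous f := by
    refine Continuous.rpow_const (by fun_prop) fun x => Or.inr (by positivity)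
  have hsym : ∀ x : ℝ, f (1 - x) = f x := by
    intro x
    simp only [hf, sub_sub_cancel]
    rw [add_comm]
  have hsplit : (∫ x in (0:ℝ)..1, f x)
      = (∫ x in (0:ℝ)..(1/2:ℝ), f x) + ∫ x in (1/2:ℝ)..1, f x :=
    (intervalIntegral.integral_add_adjacent_intervals
      (hfc.intervalIntegrable _ _) (hfc.intervalIntegrable _ _)).symm
  have hrefl : (∫ x in (1/2:ℝ)..1, f x) = ∫ x in (0:ℝ)..(1/2:ℝ), f x := by
    have h := intervalIntegral.integral_comp_sub_left (a := (0:ℝ)) (b := (1/2:ℝ)) f 1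
    rw [show (1:ℝ) - 1/2 = 1/2 by norm_num, show (1:ℝ) - 0 = 1 by norm_num] at h
    rw [← h]
    exact intervalIntegral.integral_congr fun x _ => hsym x
  have hsub : (∫ x in (0:ℝ)..(1/2:ℝ), f x)
      = ∫ u in (0:ℝ)..1, (1+u^n) ^ ((n:ℝ)⁻¹) / (1+u)^3 := by
    have hg : ∀ u ∈ Set.uIcc (0:ℝ) 1,
        HasDerivAt (fun v : ℝ => v/(1+v)) (((1+u)^2)⁻¹) u := by
      intro u hu
      rw [Set.uIcc_of_le zero_le_one] at hu
      have h1u : (1:ℝ)+u ≠ 0 := by have := hu.1; positivity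
      have := (hasDerivAt_id u).div ((hasDerivAt_id u).const_add 1) h1u
      refine this.congr_deriv ?_
      simp only [id]
      field_simp
      ring
    have hg' : ContinuousOn (fun u : ℝ => ((1+u)^2)⁻¹) (Set.uIcc (0:ℝ) 1) := by
      rw [Set.uIcc_of_le zero_le_one]
      refine ContinuousOn.inv₀ (by fun_prop) fun u hu => ?_
      have := hu.1; positivity
    have hcv := intervalIntegral.integral_comp_smul_deriv hg hg' hfc
    rw [show (0:ℝ)/(1+0) = 0 by norm_num, show (1:ℝ)/(1+1) = 1/2 by norm_num] at hcv
    rw [← hcv]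
    refine intervalIntegral.integral_congr fun u hu => ?_
    rw [Set.uIcc_of_le zero_le_one] at hu
    have hu0 : (0:ℝ) ≤ u := hu.1
    have h1u : (0:ℝ) < 1+u := by linarith
    have hval : f (u/(1+u)) = (1+u^n) ^ ((n:ℝ)⁻¹) / (1+u) := by
      have e1 : 1 - u/(1+u) = 1/(1+u) := by field_simp; ring
      have e2 : (u/(1+u))^n + (1/(1+u))^n = (u^n + 1)/(1+u)^n := by
        rw [div_pow, div_pow, ← add_div, one_pow]
      rw [hf]
      simp only []
      rw [e1, e2, Real.div_rpow (by positivity) (by positivity)]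
      congr 1
      · rw [add_comm]
      · rw [← Real.rpow_natCast (1+u) n, ← Real.rpow_mul h1u.le,
          mul_inv_cancel₀ (by positivity : (n:ℝ) ≠ 0),
          Real.rpow_one]
    rw [smul_eq_mul, Function.comp_apply, hval,
      show ((1:ℝ)+u)^3 = (1+u)^2*(1+u) by ring,
      div_eq_mul_inv, div_eq_mul_inv, mul_inv]
    ring
  rw [hsplit, hrefl, hsub, ← intervalIntegral.integral_of_le zero_le_one]
  ring

/-- For every integer `n ≥ 1`,
`I(n) = 3/4 + 2 ∑_{k=1}^∞ n^{-k} ∑_{m=1}^∞ (-1)^{m-k} (ζ_{m-1}({1}_{k-1})/m) ∫₀¹ u^{mn}/(1+u)³ du`,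
where the inner series converges absolutely for each `k` and the outer series converges
absolutely.  (Indices are shifted: `k+1` and `m+1` run over the values `k, m ≥ 1` of the
statement, and `(-1)^{m-k} = (-1)^{m+k}`.) -/
theorem stmt2 (n : ℕ) (hn : 1 ≤ n) :
    (∀ k : ℕ, Summable (fun m : ℕ =>
        |(-1 : ℝ) ^ ((m + 1) + (k + 1)) * zt1 m k / (m + 1) *
          ∫ u in (0:ℝ)..1, u ^ ((m + 1) * n) / (1 + u) ^ 3|)) ∧
    Summable (fun k : ℕ =>
        |((n : ℝ) ^ (k + 1))⁻¹ * ∑' m : ℕ,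
          (-1 : ℝ) ^ ((m + 1) + (k + 1)) * zt1 m k / (m + 1) *
            ∫ u in (0:ℝ)..1, u ^ ((m + 1) * n) / (1 + u) ^ 3|) ∧
    (∫ x in (0:ℝ)..1, (x ^ n + (1 - x) ^ n) ^ ((n : ℝ)⁻¹)) =
      3 / 4 + 2 * ∑' k : ℕ, ((n : ℝ) ^ (k + 1))⁻¹ * ∑' m : ℕ,
        (-1 : ℝ) ^ ((m + 1) + (k + 1)) * zt1 m k / (m + 1) *
          ∫ u in (0:ℝ)..1, u ^ ((m + 1) * n) / (1 + u) ^ 3 := by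
  have hS : ∀ k : ℕ, (∑' m : ℕ, (-1 : ℝ) ^ ((m + 1) + (k + 1)) * zt1 m k / (m + 1) *
        ∫ u in (0:ℝ)..1, u ^ ((m + 1) * n) / (1 + u) ^ 3)
      = ∫ u in Set.Ioc (0:ℝ) 1,
          (Real.log (1+u^n))^(k+1) / (((k+1)! : ℝ) * (1+u)^3) := by
    intro k
    rw [tsum_congr (fun m => stmt_term_eq n k m), inner_eq hn k]
  have houter : ∀ k : ℕ, ((n : ℝ) ^ (k + 1))⁻¹ * (∑' m : ℕ,
        (-1 : ℝ) ^ ((m + 1) + (k + 1)) * zt1 m k / (m + 1) *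
          ∫ u in (0:ℝ)..1, u ^ ((m + 1) * n) / (1 + u) ^ 3)
      = ∫ u in Set.Ioc (0:ℝ) 1,
          ((n:ℝ)⁻¹ * Real.log (1+u^n))^(k+1) / ((k+1)! : ℝ) / (1+u)^3 := by
    intro k
    rw [hS k, ← T_succ hn k]
  refine ⟨?_, ?_, ?_⟩
  · intro k
    exact (inner_summable hn k).congr fun m =>
      congrArg abs (stmt_term_eq n k m).symm
  · refine Summable.of_nonneg_of_le (fun k => abs_nonneg _) (fun k => ?_)
      ((summable_nat_add_iff 1).mpr summable_logtwo)
    rw [houter k, ← Real.norm_eq_abs]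
    calc ‖∫ u in Set.Ioc (0:ℝ) 1,
          ((n:ℝ)⁻¹ * Real.log (1+u^n))^(k+1) / ((k+1)! : ℝ) / (1+u)^3‖
        ≤ ∫ u in Set.Ioc (0:ℝ) 1,
            ‖((n:ℝ)⁻¹ * Real.log (1+u^n))^(k+1) / ((k+1)! : ℝ) / (1+u)^3‖ :=
          MeasureTheory.norm_integral_le_integral_norm _
      _ ≤ (Real.log 2)^(k+1) / ((k+1)! : ℝ) := T_integral_bound hn (k+1)
  · rw [In_eq hn, outer_swap hn, Summable.tsum_eq_zero_add (T_summable hn), T_zero hn,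
      tsum_congr (fun k => (houter k).symm)]
    ring
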